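/- The minimum value of Choi's QUBO with δ > ω > 0 equals −ω·M where M is the maximum number of simultaneously satisfiable clauses of f (the MAX-k-SAT value). -/

import Mathlib

noncomputable section

/-- Numeric value of a binary variable. -/
def ind (b : Bool) : ℝ := if b then 1 else 0

/-- Choi's QUBO for a `k`-CNF formula with `n` clauses. The formula `f` gives,
for clause `i` and position `j`, the pair (variable, polarity). The binary
variables `l i j` select literal occurrences. Penalties: `δ` on pairs of
occurrences in the same clause and on conflicting pairs (same variable,
opposite polarity, in different clauses), weight `-ω` on each occurrence. -/
def choiQUBO {V : Type*} [DecidableEq V] (n k : ℕ) (f : Fin n → Fin k → V × Bool)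
    (ω δ : ℝ) (l : Fin n → Fin k → Bool) : ℝ :=
  -ω * ∑ i, ∑ j, ind (l i j)
  + δ * ∑ i, ∑ j, ∑ j', (if j < j' then ind (l i j) * ind (l i j') else 0)
  + δ * ∑ i, ∑ j, ∑ i', ∑ j',
      (if i < i' ∧ (f i j).1 = (f i' j').1 ∧ (f i j).2 ≠ (f i' j').2
       then ind (l i j) * ind (l i' j') else 0)

/-- A truth assignment satisfies the formula: every clause contains a true literal. -/
def Satisfies {V : Type*} {n k : ℕ} (f : Fin n → Fin k → V × Bool) (x : V → Bool) : Prop :=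
  ∀ i, ∃ j, x (f i j).1 = (f i j).2

/-- Number of clauses of `f` satisfied by the truth assignment `x`. -/
def satCount {V : Type*} (n k : ℕ) (f : Fin n → Fin k → V × Bool) (x : V → Bool) : ℕ :=
  (Finset.univ.filter fun i : Fin n => ∃ j, x (f i j).1 = (f i j).2).card

open Finset in
/-- Per-clause counting: the number of selected occurrences in a clause is at most
the number of (ordered) pairs of selected occurrences plus one. -/
lemma choi_clause_bound (k : ℕ) (p : Fin k → Bool) :
    (Finset.univ.filter fun j => p j = true).card ≤
      (Finset.univ.filter fun q : Fin k × Fin k =>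
        q.1 < q.2 ∧ (p q.1 = true ∧ p q.2 = true)).card + 1 := by
  set s := Finset.univ.filter fun j => p j = true with hs
  rcases s.eq_empty_or_nonempty with h | h
  · simp [h]
  · have hm := s.min'_mem h
    have key : (s.erase (s.min' h)).card ≤
        (Finset.univ.filter fun q : Fin k × Fin k =>
          q.1 < q.2 ∧ (p q.1 = true ∧ p q.2 = true)).card := by
      apply Finset.card_le_card_of_injOn (fun j => (s.min' h, j))
      · intro j hj
        obtain ⟨hne, hjs⟩ := Finset.mem_erase.mp hj
        simp only [Finset.mem_coe, Finset.mem_filter, Finset.mem_univ, true_and]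
        refine ⟨lt_of_le_of_ne (s.min'_le j hjs) (Ne.symm hne), ?_, ?_⟩
        · simpa [hs] using hm
        · simpa [hs] using hjs
      · intro a _ b _ hab
        exact (Prod.mk.injEq _ _ _ _).mp hab |>.2
    have := Finset.card_erase_of_mem hm
    omega

open Finset in
/-- From a selection `l`, one can build a truth assignment whose satisfied-clause
count, plus the number of conflict pairs, dominates the number of clauses
containing a selected occurrence. -/
lemma choi_sel_bound {V : Type*} [DecidableEq V] (n k : ℕ) (f : Fin n → Fin k → V × Bool)
    (l : Fin n → Fin k → Bool) :
    ∃ x : V → Bool,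
      (univ.filter fun i : Fin n => ∃ j, l i j = true).card ≤ satCount n k f x +
        (univ.filter fun q : (Fin n × Fin k) × (Fin n × Fin k) =>
          (q.1.1 < q.2.1 ∧ (f q.1.1 q.1.2).1 = (f q.2.1 q.2.2).1 ∧
            (f q.1.1 q.1.2).2 ≠ (f q.2.1 q.2.2).2)
          ∧ (l q.1.1 q.1.2 = true ∧ l q.2.1 q.2.2 = true)).card := by
  classical
  set x : V → Bool := fun v =>
    decide (∃ i j, l i j = true ∧ (f i j).1 = v ∧ (f i j).2 = true) with hxdef
  refine ⟨x, ?_⟩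
  set Bs := (univ.filter fun q : (Fin n × Fin k) × (Fin n × Fin k) =>
          (q.1.1 < q.2.1 ∧ (f q.1.1 q.1.2).1 = (f q.2.1 q.2.2).1 ∧
            (f q.1.1 q.1.2).2 ≠ (f q.2.1 q.2.2).2)
          ∧ (l q.1.1 q.1.2 = true ∧ l q.2.1 q.2.2 = true)) with hBs
  set K := univ.filter
      (fun i : Fin n => (∃ j, l i j = true) ∧ ¬ ∃ j, x (f i j).1 = (f i j).2) with hK
  have hsub : (univ.filter fun i : Fin n => ∃ j, l i j = true) ⊆
      (univ.filter fun i : Fin n => ∃ j, x (f i j).1 = (f i j).2) ∪ K := by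
    intro i hi
    rw [mem_filter] at hi
    by_cases h : ∃ j, x (f i j).1 = (f i j).2
    · exact mem_union_left _ (mem_filter.mpr ⟨mem_univ _, h⟩)
    · exact mem_union_right _ (mem_filter.mpr ⟨mem_univ _, hi.2, h⟩)
  have hsat : (univ.filter fun i : Fin n => ∃ j, x (f i j).1 = (f i j).2).card
      = satCount n k f x := by
    rw [satCount]
  have hKB : K.card ≤ Bs.card := by
    have H : ∀ i, i ∈ K → ∃ q : (Fin n × Fin k) × (Fin n × Fin k), q ∈ Bs ∧
        (((f q.1.1 q.1.2).2 = false ∧ q.1.1 = i) ∨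
         ((f q.2.1 q.2.2).2 = false ∧ q.2.1 = i)) := by
      intro i hi
      rw [hK, mem_filter] at hi
      obtain ⟨-, ⟨j, hj⟩, hns⟩ := hi
      push_neg at hns
      have hfalse : (f i j).2 = false := by
        cases hb : (f i j).2
        · rfl
        · exact absurd (show x (f i j).1 = (f i j).2 by
            rw [hb, hxdef]; exact decide_eq_true ⟨i, j, hj, rfl, hb⟩) (hns j)
      have htrue : x (f i j).1 = true := by
        have := hns j
        rw [hfalse] at this
        exact Bool.ne_false_iff.mp this
      rw [hxdef] at htrue
      simp only [decide_eq_true_iff] at htrue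
      obtain ⟨i', j', hl', hv', hp'⟩ := htrue
      have hne : i ≠ i' := by
        rintro rfl
        exact hns j' (by rw [hp', hv', hxdef]; exact decide_eq_true ⟨i, j', hl', hv', hp'⟩)
      rcases lt_or_gt_of_ne hne with hlt | hgt
      · refine ⟨((i, j), (i', j')), ?_, Or.inl ⟨hfalse, rfl⟩⟩
        rw [hBs, mem_filter]
        exact ⟨mem_univ _, ⟨hlt, hv'.symm, by rw [hfalse, hp']; simp⟩, hj, hl'⟩
      · refine ⟨((i', j'), (i, j)), ?_, Or.inr ⟨hfalse, rfl⟩⟩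
        rw [hBs, mem_filter]
        exact ⟨mem_univ _, ⟨hgt, hv', by rw [hfalse, hp']; simp⟩, hl', hj⟩
    rcases K.eq_empty_or_nonempty with hKe | ⟨i0, hi0⟩
    · simp [hKe]
    · have : Nonempty ((Fin n × Fin k) × (Fin n × Fin k)) := ⟨(H i0 hi0).choose⟩
      choose! g hg1 hg2 using H
      apply Finset.card_le_card_of_injOn g (fun i hi => hg1 i hi)
      intro a ha b hb hab
      have hpa := hg2 a ha
      have hpb := hg2 b hb
      rw [hab] at hpa
      have hBmem := hg1 b hb
      rw [hBs, mem_filter] at hBmem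
      obtain ⟨-, ⟨-, -, hpne⟩, -⟩ := hBmem
      rcases hpa with ⟨ha1, ha2⟩ | ⟨ha1, ha2⟩ <;> rcases hpb with ⟨hb1, hb2⟩ | ⟨hb1, hb2⟩
      · exact ha2.symm.trans hb2
      · exact absurd (ha1.trans hb1.symm) hpne
      · exact absurd (hb1.trans ha1.symm) hpne
      · exact ha2.symm.trans hb2
  calc (univ.filter fun i : Fin n => ∃ j, l i j = true).card
      ≤ ((univ.filter fun i : Fin n => ∃ j, x (f i j).1 = (f i j).2) ∪ K).card :=
        card_le_card hsub
    _ ≤ (univ.filter fun i : Fin n => ∃ j, x (f i j).1 = (f i j).2).card + K.card :=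
        card_union_le _ _
    _ ≤ satCount n k f x + Bs.card := by rw [hsat]; exact Nat.add_le_add le_rfl hKB

open Finset in
/-- An optimal selection: given any truth assignment, there is a selection whose
QUBO value is `-ω` times the number of satisfied clauses. -/
lemma choi_attains {V : Type*} [DecidableEq V] (n k : ℕ) (f : Fin n → Fin k → V × Bool)
    (ω δ : ℝ) (x : V → Bool) :
    ∃ l, choiQUBO n k f ω δ l = -ω * (satCount n k f x : ℝ) := by
  classical
  set l : Fin n → Fin k → Bool := fun i j =>
    decide (∃ h : ∃ j', x (f i j').1 = (f i j').2, j = h.choose) with hldef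
  have hl : ∀ i j, l i j = true ↔ ∃ h : ∃ j', x (f i j').1 = (f i j').2, j = h.choose := by
    intro i j; rw [hldef]; exact decide_eq_true_iff
  have hsatl : ∀ i j, l i j = true → x (f i j).1 = (f i j).2 := by
    intro i j hj
    obtain ⟨h, rfl⟩ := (hl i j).mp hj
    exact h.choose_spec
  have huniq : ∀ i j j', l i j = true → l i j' = true → j = j' := by
    intro i j j' hj hj'
    obtain ⟨h1, rfl⟩ := (hl i j).mp hj
    obtain ⟨h2, e2⟩ := (hl i j').mp hj'
    exact e2.symm
  refine ⟨l, ?_⟩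
  have h1 : ∑ i, ∑ j, ind (l i j) = (satCount n k f x : ℝ) := by
    rw [satCount, Finset.card_filter]
    push_cast
    refine Finset.sum_congr rfl fun i _ => ?_
    by_cases h : ∃ j', x (f i j').1 = (f i j').2
    · rw [if_pos h]
      have hiff : ∀ j, l i j = true ↔ j = h.choose := by
        intro j
        rw [hl i j]
        exact ⟨fun ⟨h', e⟩ => e, fun e => ⟨h, e⟩⟩
      calc ∑ j, ind (l i j) = ∑ j, if j = h.choose then (1:ℝ) else 0 := by
            refine Finset.sum_congr rfl fun j _ => ?_
            by_cases hj : j = h.choose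
            · rw [if_pos hj]; have := (hiff j).mpr hj; simp [ind, this]
            · rw [if_neg hj]
              have : l i j = false := by
                rw [← Bool.not_eq_true]; exact fun hc => hj ((hiff j).mp hc)
              simp [ind, this]
        _ = 1 := by rw [Finset.sum_ite_eq' univ (h.choose) (fun _ => (1:ℝ))]; simp
    · rw [if_neg h]
      refine Finset.sum_eq_zero fun j _ => ?_
      have : l i j = false := by
        rw [← Bool.not_eq_true, hl i j]
        rintro ⟨h', -⟩
        exact h h'
      simp [ind, this]
  have h2 : ∑ i, ∑ j, ∑ j', (if j < j' then ind (l i j) * ind (l i j') else 0) = 0 := by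
    refine Finset.sum_eq_zero fun i _ => Finset.sum_eq_zero fun j _ =>
      Finset.sum_eq_zero fun j' _ => ?_
    split_ifs with hjj
    · by_cases hj : l i j = true
      · by_cases hj' : l i j' = true
        · exact absurd (huniq i j j' hj hj') (ne_of_lt hjj)
        · rw [Bool.not_eq_true] at hj'; simp [ind, hj']
      · rw [Bool.not_eq_true] at hj; simp [ind, hj]
    · rfl
  have h3 : ∑ i, ∑ j, ∑ i', ∑ j',
      (if i < i' ∧ (f i j).1 = (f i' j').1 ∧ (f i j).2 ≠ (f i' j').2
       then ind (l i j) * ind (l i' j') else 0) = 0 := by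
    refine Finset.sum_eq_zero fun i _ => Finset.sum_eq_zero fun j _ =>
      Finset.sum_eq_zero fun i' _ => Finset.sum_eq_zero fun j' _ => ?_
    split_ifs with hc
    · by_cases hj : l i j = true
      · by_cases hj' : l i' j' = true
        · exfalso
          obtain ⟨-, hv, hp⟩ := hc
          have e1 := hsatl i j hj
          have e2 := hsatl i' j' hj'
          rw [hv] at e1
          exact hp (e1.symm.trans e2)
        · rw [Bool.not_eq_true] at hj'; simp [ind, hj']
      · rw [Bool.not_eq_true] at hj; simp [ind, hj]
    · rfl
  rw [choiQUBO, h1, h2, h3]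
  ring

/-- With `δ > ω > 0`, the minimum value of Choi's QUBO equals `-ω·M`, where `M`
is the maximum number of simultaneously satisfiable clauses (MAX-k-SAT value). -/
theorem choi_maxsat {V : Type*} [DecidableEq V] (n k : ℕ)
    (f : Fin n → Fin k → V × Bool) (ω δ : ℝ) (hω : 0 < ω) (hδ : ω < δ) (M : ℕ)
    (hM : IsGreatest {m : ℕ | ∃ x : V → Bool, satCount n k f x = m} M) :
    IsLeast (Set.range (choiQUBO n k f ω δ)) (-ω * (M : ℝ)) := by
  classical
  constructor
  · obtain ⟨x, hx⟩ := hM.1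
    obtain ⟨l, hl⟩ := choi_attains n k f ω δ x
    exact ⟨l, by rw [hl, hx]⟩
  · rintro y ⟨l, rfl⟩
    -- Notation for the three counts
    set T : ℕ := ∑ i, (Finset.univ.filter fun j => l i j = true).card with hT
    set A : ℕ := ∑ i, (Finset.univ.filter fun q : Fin k × Fin k =>
        q.1 < q.2 ∧ (l i q.1 = true ∧ l i q.2 = true)).card with hA
    set Bc : ℕ := (Finset.univ.filter fun q : (Fin n × Fin k) × (Fin n × Fin k) =>
        (q.1.1 < q.2.1 ∧ (f q.1.1 q.1.2).1 = (f q.2.1 q.2.2).1 ∧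
          (f q.1.1 q.1.2).2 ≠ (f q.2.1 q.2.2).2)
        ∧ (l q.1.1 q.1.2 = true ∧ l q.2.1 q.2.2 = true)).card with hB
    -- Express the QUBO value in terms of the counts
    have e1 : ∑ i, ∑ j, ind (l i j) = (T : ℝ) := by
      rw [hT]
      push_cast
      refine Finset.sum_congr rfl fun i _ => ?_
      rw [Finset.card_filter]
      push_cast
      exact Finset.sum_congr rfl fun j _ => by by_cases h : l i j <;> simp [ind, h]
    have e2 : ∑ i, ∑ j, ∑ j', (if j < j' then ind (l i j) * ind (l i j') else 0)
        = (A : ℝ) := by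
      rw [hA]
      push_cast
      refine Finset.sum_congr rfl fun i _ => ?_
      rw [Finset.card_filter]
      push_cast
      rw [Fintype.sum_prod_type]
      refine Finset.sum_congr rfl fun j _ => Finset.sum_congr rfl fun j' _ => ?_
      by_cases h1 : j < j' <;> by_cases h2 : l i j <;> by_cases h3 : l i j' <;>
        simp [ind, h1, h2, h3]
    have e3 : ∑ i, ∑ j, ∑ i', ∑ j',
        (if i < i' ∧ (f i j).1 = (f i' j').1 ∧ (f i j).2 ≠ (f i' j').2
         then ind (l i j) * ind (l i' j') else 0) = (Bc : ℝ) := by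
      rw [hB, Finset.card_filter]
      push_cast
      simp only [Fintype.sum_prod_type]
      refine Finset.sum_congr rfl fun i _ => Finset.sum_congr rfl fun j _ =>
        Finset.sum_congr rfl fun i' _ => Finset.sum_congr rfl fun j' _ => ?_
      by_cases h1 : i < i' ∧ (f i j).1 = (f i' j').1 ∧ (f i j).2 ≠ (f i' j').2 <;>
        by_cases h2 : l i j <;> by_cases h3 : l i' j' <;> simp [ind, h1, h2, h3]
    -- The key counting inequality `T ≤ A + Bc + M`
    have hTAC : T ≤ A + (Finset.univ.filter fun i : Fin n => ∃ j, l i j = true).card := by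
      rw [hT, hA, Finset.card_filter, ← Finset.sum_add_distrib]
      refine Finset.sum_le_sum fun i _ => ?_
      by_cases h : ∃ j, l i j = true
      · rw [if_pos h]
        exact choi_clause_bound k (l i)
      · rw [if_neg h]
        push_neg at h
        have : (Finset.univ.filter fun j => l i j = true) = ∅ := by
          refine Finset.filter_eq_empty_iff.mpr fun j _ => ?_
          simp [h j]
        simp [this]
    obtain ⟨x, hx⟩ := choi_sel_bound n k f l
    have hxM : satCount n k f x ≤ M := hM.2 ⟨x, rfl⟩
    have hkey : T ≤ A + Bc + M := by
      rw [hB]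
      omega
    -- Conclude by arithmetic
    rw [choiQUBO, e1, e2, e3]
    have hkey' : (T : ℝ) ≤ (A : ℝ) + (Bc : ℝ) + (M : ℝ) := by exact_mod_cast hkey
    have f1 : ω * (T : ℝ) ≤ ω * ((A : ℝ) + (Bc : ℝ) + (M : ℝ)) :=
      mul_le_mul_of_nonneg_left hkey' hω.le
    have f2 : ω * (A : ℝ) ≤ δ * (A : ℝ) :=
      mul_le_mul_of_nonneg_right hδ.le (Nat.cast_nonneg _)
    have f3 : ω * (Bc : ℝ) ≤ δ * (Bc : ℝ) :=
      mul_le_mul_of_nonneg_right hδ.le (Nat.cast_nonneg _)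
    linarith
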